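/- For 1 ≤ k ≤ N, define the N×N matrix E^{(k)} = I + T^{(k)}, where T^{(k)}_{kj} = 2·(−1)^{k−j+1} for j < k, T^{(k)}_{kk} = 0, T^{(k)}_{kj} = 2·(−1)^{j−k} for j > k, and all other rows of T^{(k)} are zero. Let H^{(k)} = E^{(1)}⋯E^{(k)}. Then for 1 ≤ k ≤ N and 1 ≤ m ≤ N − k: H^{(k)}_{i,k+m} = 2·3^{k−i}·(−1)^{i+k+m} for 1 ≤ i ≤ k; H^{(k)}_{i,k+m} = 0 for k+1 ≤ i ≤ N with i ≠ k+m; and H^{(k)}_{k+m,k+m} = 1. -/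
import Mathlib


open Matrix BigOperators

/-- `Emat N k` is the matrix `I + T^(k)` (0-indexed `k`): row `k` of `T^(k)` has entries
`2·(-1)^(k-j+1)` for `j < k`, `0` at `j = k`, and `2·(-1)^(j-k)` for `j > k`;
all other rows of `T^(k)` are zero. -/
def Emat (N : ℕ) (k : ℕ) : Matrix (Fin N) (Fin N) ℝ :=
  fun i j => (if i = j then 1 else 0) +
    (if (i : ℕ) = k then
       (if (j : ℕ) < k then 2 * (-1 : ℝ) ^ (k - (j : ℕ) + 1)
        else if k < (j : ℕ) then 2 * (-1 : ℝ) ^ ((j : ℕ) - k)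
        else 0)
     else 0)

/-- The ordered product `H^(k) = E^(1) E^(2) ⋯ E^(k)`. -/
noncomputable def Hmat (N k : ℕ) : Matrix (Fin N) (Fin N) ℝ :=
  ((List.range k).map (Emat N)).prod

lemma neg_one_sub (c k : ℕ) (h : k ≤ c) : (-1:ℝ)^(c-k) = (-1)^(c+k) := by
  have h1 : c + k = (c - k) + 2*k := by omega
  rw [h1, pow_add, pow_mul, neg_one_sq, one_pow, mul_one]

lemma hmat_succ (N k : ℕ) : Hmat N (k+1) = Hmat N k * Emat N k := by
  unfold Hmat
  rw [List.range_succ, List.map_append, List.prod_append, List.map_singleton,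
    List.prod_singleton]

lemma hmat_succ_apply (N k : ℕ) (hk : k < N) (i c : Fin N) (hc : k < (c:ℕ)) :
    Hmat N (k+1) i c = Hmat N k i c + Hmat N k i ⟨k, hk⟩ * (2 * (-1:ℝ)^((c:ℕ) - k)) := by
  rw [hmat_succ, Matrix.mul_apply]
  have he : ∀ j : Fin N, Emat N k j c =
      (if j = c then (1:ℝ) else 0) + (if j = ⟨k, hk⟩ then 2 * (-1:ℝ)^((c:ℕ) - k) else 0) := by
    intro j
    unfold Emat
    have hne : ¬ (c:ℕ) < k := by omega
    have hiff : ((j:ℕ) = k) ↔ j = ⟨k, hk⟩ := ⟨fun h => Fin.ext h, fun h => by rw [h]⟩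
    by_cases hj : j = ⟨k, hk⟩ <;> simp [hj, hc, hne, hiff]
  simp only [he, mul_add, mul_ite, mul_one, mul_zero, Finset.sum_add_distrib,
    Finset.sum_ite_eq', Finset.mem_univ, if_true]

theorem stmt_15 (N k : ℕ) (hk1 : 1 ≤ k) (hkN : k ≤ N) :
    ∀ c : Fin N, k ≤ (c : ℕ) →
      (∀ i : Fin N, (i : ℕ) < k →
          Hmat N k i c = 2 * 3 ^ (k - 1 - (i : ℕ)) * (-1 : ℝ) ^ ((i : ℕ) + (c : ℕ))) ∧
      (∀ i : Fin N, k ≤ (i : ℕ) → i ≠ c → Hmat N k i c = 0) ∧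
      Hmat N k c c = 1 := by
  revert hkN
  induction k, hk1 using Nat.le_induction with
  | base =>
    intro hkN c hc
    have h1 : Hmat N 1 = Emat N 0 := by
      unfold Hmat
      rw [show List.range 1 = [0] from rfl, List.map_singleton, List.prod_singleton]
    refine ⟨?_, ?_, ?_⟩
    · intro i hi
      have hi0 : (i:ℕ) = 0 := by omega
      have hic : i ≠ c := fun h => by omega
      simp [h1, Emat, hi0, hic, show 0 < (c:ℕ) by omega]
    · intro i hi hic
      have hi0 : (i:ℕ) ≠ 0 := by omega
      simp [h1, Emat, hi0, hic]
    · have hc0 : (c:ℕ) ≠ 0 := by omega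
      simp [h1, Emat, hc0]
  | succ k hk ih =>
    intro hkN c hc
    have hkN' : k < N := by omega
    have ih' := ih (le_of_lt hkN')
    have hck : k < (c:ℕ) := by omega
    set kf : Fin N := ⟨k, hkN'⟩ with hkf
    have hkfc : k ≤ (kf:ℕ) := le_refl k
    obtain ⟨ha, hb, hd⟩ := ih' c (by omega)
    obtain ⟨ha2, hb2, hd2⟩ := ih' kf hkfc
    have hsign : (-1:ℝ)^((c:ℕ) - k) = (-1)^((c:ℕ)+k) := neg_one_sub _ _ (by omega)
    refine ⟨?_, ?_, ?_⟩
    · intro i hi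
      rw [hmat_succ_apply N k hkN' i c hck, hsign]
      by_cases hik : (i:ℕ) < k
      · rw [ha i hik, ha2 i hik]
        have h3 : k - 1 - (i:ℕ) + 1 = k + 1 - 1 - (i:ℕ) := by omega
        rw [← h3, pow_succ]
        have hsg : (-1:ℝ)^((i:ℕ)+k) * (-1)^((c:ℕ)+k) = (-1)^((i:ℕ)+(c:ℕ)) := by
          rw [← pow_add]
          have h4 : (i:ℕ)+k+((c:ℕ)+k) = ((i:ℕ)+(c:ℕ)) + 2*k := by omega
          rw [h4, pow_add, pow_mul, neg_one_sq, one_pow, mul_one]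
        linear_combination (4 * (3:ℝ)^(k-1-(i:ℕ))) * hsg
      · have hik' : (i:ℕ) = k := by omega
        have hif : i = kf := Fin.ext hik'
        have hic : i ≠ c := fun h => by omega
        rw [hb i (by omega) hic, hif, hd2]
        have h3 : k + 1 - 1 - (kf:ℕ) = 0 := by simp [hkf]
        rw [h3, add_comm ((kf:ℕ)) ((c:ℕ)), show ((kf:ℕ)) = k from rfl]
        ring
    · intro i hi hic
      have hik : i ≠ kf := fun h => by rw [h] at hi; simp [hkf] at hi
      rw [hmat_succ_apply N k hkN' i c hck, hb i (by omega) hic, hb2 i (by omega) hik]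
      ring
    · have hckf : c ≠ kf := fun h => by rw [h] at hck; simp [hkf] at hck
      rw [hmat_succ_apply N k hkN' c c hck, hd, hb2 c (by omega) hckf]
      ring
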